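/- Consider the customer attraction game with node set N = {q_1,q_2,q_3,q_4} with values v_{q_1}=2, v_{q_2}=1, v_{q_3}=1, v_{q_4}=2, and three agents with weights w_1=4, w_2=1, w_3=1, where agent 1 has strategy space {{q_1,q_2}, {q_3,q_4}}, agent 2 has strategy space {{q_1,q_3}, {q_2,q_4}}, and agent 3 has the single strategy {q_1,q_4}. This game has no pure Nash equilibrium. -/

import Mathlib

open Finset

/-- A customer attraction game: nodes `N` with integer values `≥ 1`, agents `A`
with integer weights `≥ 1`, and a nonempty finite strategy space (a finite set of
subsets of `N`) for each agent. -/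
structure CAG (N A : Type*) [Fintype N] [Fintype A] where
  v : N → ℕ
  v_pos : ∀ j, 1 ≤ v j
  w : A → ℕ
  w_pos : ∀ i, 1 ≤ w i
  strat : A → Finset (Finset N)
  strat_ne : ∀ i, (strat i).Nonempty

variable {N A : Type*} [Fintype N] [Fintype A] [DecidableEq N]

/-- The load `c(j,S)` of node `j`: total weight of agents attracting `j`. -/
def CAG.load (G : CAG N A) (S : A → Finset N) (j : N) : ℕ :=
  ∑ i : A, if j ∈ S i then G.w i else 0

/-- The utility `U_i(S) = ∑_{j ∈ S_i} v_j · w_i / c(j,S)`. -/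
noncomputable def CAG.util (G : CAG N A) (S : A → Finset N) (i : A) : ℝ :=
  ∑ j ∈ S i, (G.v j : ℝ) * (G.w i : ℝ) / (G.load S j : ℝ)

/-- A strategy profile: each agent plays a strategy from her strategy space. -/
def CAG.valid (G : CAG N A) (S : A → Finset N) : Prop :=
  ∀ i, S i ∈ G.strat i

/-- Pure Nash equilibrium. -/
def CAG.PNE [DecidableEq A] (G : CAG N A) (S : A → Finset N) : Prop :=
  G.valid S ∧ ∀ i, ∀ S' ∈ G.strat i, G.util (Function.update S i S') i ≤ G.util S i

/-- Social welfare. -/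
noncomputable def CAG.sw (G : CAG N A) (S : A → Finset N) : ℝ :=
  ∑ i : A, G.util S i

/-- The harmonic number `H_c = ∑_{k=1}^{c} 1/k`. -/
noncomputable def harm (c : ℕ) : ℝ := ∑ k ∈ Finset.range c, (1 : ℝ) / (k + 1)

/-- Rosenthal-type potential `Φ(S) = ∑_j v_j ∑_{k=1}^{c(j,S)} 1/k`. -/
noncomputable def CAG.pot (G : CAG N A) (S : A → Finset N) : ℝ :=
  ∑ j : N, (G.v j : ℝ) * harm (G.load S j)

/-- The instance of Example 1: nodes `q_1,…,q_4` with values `2,1,1,2`, agents with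
weights `4,1,1`, strategy spaces `{{q_1,q_2},{q_3,q_4}}`, `{{q_1,q_3},{q_2,q_4}}`
and `{{q_1,q_4}}`. -/
def G9 : CAG (Fin 4) (Fin 3) where
  v := ![2, 1, 1, 2]
  v_pos := by decide
  w := ![4, 1, 1]
  w_pos := by decide
  strat := ![{({0, 1} : Finset (Fin 4)), ({2, 3} : Finset (Fin 4))},
             {({0, 2} : Finset (Fin 4)), ({1, 3} : Finset (Fin 4))},
             {({0, 3} : Finset (Fin 4))}]
  strat_ne := by decide

/-- The game `G9` has no pure Nash equilibrium. -/
theorem no_PNE_example : ¬ ∃ S : Fin 3 → Finset (Fin 4), G9.PNE S := by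
  rintro ⟨S, hval, hne⟩
  have h0 := hval 0
  have h1 := hval 1
  have h2 := hval 2
  simp only [G9, Finset.mem_insert, Finset.mem_singleton,
    Matrix.cons_val_zero, Matrix.cons_val_one, Matrix.head_cons,
    Matrix.cons_val_two, Matrix.tail_cons] at h0 h1 h2
  rcases h0 with h0 | h0 <;> rcases h1 with h1 | h1
  · have h := hne 0 {2, 3} (by simp [G9])
    rw [show S = ![({0,1} : Finset (Fin 4)), {0,2}, {0,3}] from
      funext fun i => by fin_cases i <;> simp [h0, h1, h2]] at h
    norm_num +decide [CAG.util, CAG.load, G9, Fin.sum_univ_three, Function.update, Matrix.cons_val_zero, Matrix.cons_val_one, Matrix.cons_val_two, Matrix.cons_val_three, Matrix.tail_cons, Matrix.head_cons,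
      Finset.sum_insert, Finset.mem_insert, Finset.mem_singleton, Finset.sum_singleton, show ((3:Fin 4):ℕ) = 3 from rfl] at h
  · have h := hne 1 {0, 2} (by simp [G9])
    rw [show S = ![({0,1} : Finset (Fin 4)), {1,3}, {0,3}] from
      funext fun i => by fin_cases i <;> simp [h0, h1, h2]] at h
    norm_num +decide [CAG.util, CAG.load, G9, Fin.sum_univ_three, Function.update, Matrix.cons_val_zero, Matrix.cons_val_one, Matrix.cons_val_two, Matrix.cons_val_three, Matrix.tail_cons, Matrix.head_cons,
      Finset.sum_insert, Finset.mem_insert, Finset.mem_singleton, Finset.sum_singleton, show ((3:Fin 4):ℕ) = 3 from rfl] at h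
  · have h := hne 1 {1, 3} (by simp [G9])
    rw [show S = ![({2,3} : Finset (Fin 4)), {0,2}, {0,3}] from
      funext fun i => by fin_cases i <;> simp [h0, h1, h2]] at h
    norm_num +decide [CAG.util, CAG.load, G9, Fin.sum_univ_three, Function.update, Matrix.cons_val_zero, Matrix.cons_val_one, Matrix.cons_val_two, Matrix.cons_val_three, Matrix.tail_cons, Matrix.head_cons,
      Finset.sum_insert, Finset.mem_insert, Finset.mem_singleton, Finset.sum_singleton, show ((3:Fin 4):ℕ) = 3 from rfl] at h
  · have h := hne 0 {0, 1} (by simp [G9])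
    rw [show S = ![({2,3} : Finset (Fin 4)), {1,3}, {0,3}] from
      funext fun i => by fin_cases i <;> simp [h0, h1, h2]] at h
    norm_num +decide [CAG.util, CAG.load, G9, Fin.sum_univ_three, Function.update, Matrix.cons_val_zero, Matrix.cons_val_one, Matrix.cons_val_two, Matrix.cons_val_three, Matrix.tail_cons, Matrix.head_cons,
      Finset.sum_insert, Finset.mem_insert, Finset.mem_singleton, Finset.sum_singleton, show ((3:Fin 4):ℕ) = 3 from rfl] at h
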